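/- Let (X₁, d₁, μ₁) and (X₂, d₂, μ₂) be metric measure spaces, let φᵢ : Xᵢ → Z be isometric embeddings into a common metric space (Z, d_Z), and let q be a coupling between μ₁ and μ₂. Then |∫∫ d₁(x,y) dμ₁(x) dμ₁(y) − ∫∫ d₂(x,y) dμ₂(x) dμ₂(y)| ≤ 2 ∫_{X₁×X₂} d_Z(φ₁(x), φ₂(y)) dq(x, y). -/

import Mathlib

open scoped ENNReal

open MeasureTheory

private lemma cont_int_edist {α X : Type*} [MeasurableSpace α] [PseudoEMetricSpace X]
    (ν : Measure α) [IsProbabilityMeasure ν] (f : α → X) :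
    Continuous fun x : X => ∫⁻ a, edist x (f a) ∂ν := by
  apply continuous_of_le_add_edist 1 ENNReal.one_ne_top
  intro x y
  calc ∫⁻ a, edist x (f a) ∂ν
      ≤ ∫⁻ a, edist y (f a) + edist x y ∂ν :=
        lintegral_mono fun a => by
          calc edist x (f a) ≤ edist x y + edist y (f a) := edist_triangle _ _ _
          _ = edist y (f a) + edist x y := by rw [add_comm]
    _ = (∫⁻ a, edist y (f a) ∂ν) + edist x y * ν Set.univ := by
        rw [lintegral_add_right _ measurable_const, lintegral_const]
    _ = (∫⁻ a, edist y (f a) ∂ν) + 1 * edist x y := by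
        rw [measure_univ, mul_one, one_mul]

private lemma key_ineq {Ω X Y : Type*} [MeasurableSpace Ω]
    [MetricSpace X] [MeasurableSpace X] [BorelSpace X]
    [MetricSpace Y] [MeasurableSpace Y] [BorelSpace Y]
    (q : Measure Ω) [IsProbabilityMeasure q]
    (π₁ : Ω → X) (π₂ : Ω → Y) (hπ₁ : Measurable π₁) (hπ₂ : Measurable π₂)
    (μ : Measure X) (ν : Measure Y) [IsProbabilityMeasure μ] [IsProbabilityMeasure ν]
    (hμ : q.map π₁ = μ) (hν : q.map π₂ = ν)
    (F : Ω → ℝ≥0∞)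
    (hF : ∀ ω ω', edist (π₁ ω) (π₁ ω') ≤ F ω + edist (π₂ ω) (π₂ ω') + F ω') :
    ∫⁻ x, ∫⁻ y, edist x y ∂μ ∂μ ≤ (∫⁻ x, ∫⁻ y, edist x y ∂ν ∂ν) + 2 * ∫⁻ ω, F ω ∂q := by
  set C := ∫⁻ ω, F ω ∂q with hC
  have hgμ : Measurable fun x : X => ∫⁻ y, edist x y ∂μ :=
    (cont_int_edist μ (id : X → X)).measurable
  have hgν : Measurable fun b : Y => ∫⁻ y, edist b y ∂ν :=
    (cont_int_edist ν (id : Y → Y)).measurable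
  have hgν₂ : Measurable fun ω : Ω => ∫⁻ y, edist (π₂ ω) y ∂ν := hgν.comp hπ₂
  have heX : ∀ c : X, Measurable fun y : X => edist c y := fun c =>
    (continuous_const.edist continuous_id).measurable
  have heY : ∀ c : Y, Measurable fun y : Y => edist c y := fun c =>
    (continuous_const.edist continuous_id).measurable
  have step1 : ∫⁻ x, ∫⁻ y, edist x y ∂μ ∂μ
      = ∫⁻ ω, ∫⁻ ω', edist (π₁ ω) (π₁ ω') ∂q ∂q := by
    have h := lintegral_map (μ := q) hgμ hπ₁
    rw [hμ] at h
    rw [h]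
    refine lintegral_congr fun ω => ?_
    have h2 := lintegral_map (μ := q) (heX (π₁ ω)) hπ₁
    rw [hμ] at h2
    exact h2
  have step2 : ∀ ω, (∫⁻ ω', F ω + edist (π₂ ω) (π₂ ω') + F ω' ∂q)
      = F ω + (∫⁻ y, edist (π₂ ω) y ∂ν) + C := by
    intro ω
    have hmeas : Measurable fun ω' => F ω + edist (π₂ ω) (π₂ ω') :=
      measurable_const.add ((heY (π₂ ω)).comp hπ₂)
    have hmap : ∫⁻ ω', edist (π₂ ω) (π₂ ω') ∂q = ∫⁻ y, edist (π₂ ω) y ∂ν := by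
      have h := lintegral_map (μ := q) (heY (π₂ ω)) hπ₂
      rw [hν] at h
      exact h.symm
    rw [lintegral_add_left hmeas, lintegral_add_left measurable_const, lintegral_const,
      measure_univ, mul_one, hmap]
  calc ∫⁻ x, ∫⁻ y, edist x y ∂μ ∂μ
      = ∫⁻ ω, ∫⁻ ω', edist (π₁ ω) (π₁ ω') ∂q ∂q := step1
    _ ≤ ∫⁻ ω, ∫⁻ ω', F ω + edist (π₂ ω) (π₂ ω') + F ω' ∂q ∂q :=
        lintegral_mono fun ω => lintegral_mono fun ω' => hF ω ω'
    _ = ∫⁻ ω, ((∫⁻ y, edist (π₂ ω) y ∂ν) + C) + F ω ∂q := by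
        refine lintegral_congr fun ω => ?_
        rw [step2 ω]; ring
    _ = ((∫⁻ ω, (∫⁻ y, edist (π₂ ω) y ∂ν) + C ∂q) + C) := by
        rw [lintegral_add_left (f := fun ω => (∫⁻ y, edist (π₂ ω) y ∂ν) + C)
          (hgν₂.add measurable_const)]
    _ = (∫⁻ x, ∫⁻ y, edist x y ∂ν ∂ν) + 2 * C := by
        rw [lintegral_add_left hgν₂, lintegral_const, measure_univ, mul_one]
        have h := lintegral_map (μ := q) hgν hπ₂
        rw [hν] at h
        rw [← h]
        ring

theorem abs_double_int_diff_le_two_coupling_int {X₁ X₂ Z : Type*}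
    [MetricSpace X₁] [MeasurableSpace X₁] [BorelSpace X₁]
    [MetricSpace X₂] [MeasurableSpace X₂] [BorelSpace X₂] [MetricSpace Z]
    (μ₁ : Measure X₁) (μ₂ : Measure X₂)
    [IsProbabilityMeasure μ₁] [IsProbabilityMeasure μ₂]
    (φ₁ : X₁ → Z) (φ₂ : X₂ → Z) (hφ₁ : Isometry φ₁) (hφ₂ : Isometry φ₂)
    (q : Measure (X₁ × X₂)) (hq : q.map Prod.fst = μ₁ ∧ q.map Prod.snd = μ₂)
    (hfin₁ : ∫⁻ x, ∫⁻ y, edist x y ∂μ₁ ∂μ₁ ≠ ∞)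
    (hfin₂ : ∫⁻ x, ∫⁻ y, edist x y ∂μ₂ ∂μ₂ ≠ ∞) :
    (∫⁻ x, ∫⁻ y, edist x y ∂μ₁ ∂μ₁
        ≤ ∫⁻ x, ∫⁻ y, edist x y ∂μ₂ ∂μ₂ + 2 * ∫⁻ p, edist (φ₁ p.1) (φ₂ p.2) ∂q) ∧
      (∫⁻ x, ∫⁻ y, edist x y ∂μ₂ ∂μ₂
        ≤ ∫⁻ x, ∫⁻ y, edist x y ∂μ₁ ∂μ₁ + 2 * ∫⁻ p, edist (φ₁ p.1) (φ₂ p.2) ∂q) := by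
  haveI : IsProbabilityMeasure q := by
    constructor
    have : (q.map Prod.fst) Set.univ = q Set.univ := by
      rw [Measure.map_apply measurable_fst MeasurableSet.univ, Set.preimage_univ]
    rw [← this, hq.1, measure_univ]
  have hF1 : ∀ p p' : X₁ × X₂, edist p.1 p'.1
      ≤ edist (φ₁ p.1) (φ₂ p.2) + edist p.2 p'.2 + edist (φ₁ p'.1) (φ₂ p'.2) := by
    intro p p'
    calc edist p.1 p'.1 = edist (φ₁ p.1) (φ₁ p'.1) := (hφ₁.edist_eq _ _).symm
      _ ≤ edist (φ₁ p.1) (φ₂ p.2) + edist (φ₂ p.2) (φ₂ p'.2) + edist (φ₂ p'.2) (φ₁ p'.1) :=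
          edist_triangle4 _ _ _ _
      _ = edist (φ₁ p.1) (φ₂ p.2) + edist p.2 p'.2 + edist (φ₁ p'.1) (φ₂ p'.2) := by
          rw [hφ₂.edist_eq, edist_comm (φ₂ p'.2)]
  have hF2 : ∀ p p' : X₁ × X₂, edist p.2 p'.2
      ≤ edist (φ₁ p.1) (φ₂ p.2) + edist p.1 p'.1 + edist (φ₁ p'.1) (φ₂ p'.2) := by
    intro p p'
    calc edist p.2 p'.2 = edist (φ₂ p.2) (φ₂ p'.2) := (hφ₂.edist_eq _ _).symm
      _ ≤ edist (φ₂ p.2) (φ₁ p.1) + edist (φ₁ p.1) (φ₁ p'.1) + edist (φ₁ p'.1) (φ₂ p'.2) :=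
          edist_triangle4 _ _ _ _
      _ = edist (φ₁ p.1) (φ₂ p.2) + edist p.1 p'.1 + edist (φ₁ p'.1) (φ₂ p'.2) := by
          rw [hφ₁.edist_eq, edist_comm (φ₂ p.2)]
  exact ⟨key_ineq q Prod.fst Prod.snd measurable_fst measurable_snd μ₁ μ₂ hq.1 hq.2 _ hF1,
    key_ineq q Prod.snd Prod.fst measurable_snd measurable_fst μ₂ μ₁ hq.2 hq.1 _ hF2⟩
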